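/- Let q and t be integers with q ≥ 1, t ≥ 1, q ≤ C(n+d,n) − 1 and q + 1 ≤ C(n+t,n). Then the map δ_{q,t} : ⋀^q S_d ⊗ S_t → ⋀^{q−1} S_d ⊗ S_{t+d} has nonzero kernel. (Equivalently, the bundle ⋀^q E_d(t) on P^n has a nonzero global section.) -/
import Mathlib


open TensorProduct

noncomputable section

variable (K : Type*) [Field K]

/-- `S K n e` is the space of homogeneous polynomials of degree `e`
in the `n+1` variables `x_0, …, x_n`. -/
abbrev S (n e : ℕ) : Submodule K (MvPolynomial (Fin (n + 1)) K) :=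
  MvPolynomial.homogeneousSubmodule (Fin (n + 1)) K e

/-- The product of a homogeneous polynomial of degree `d` with one of degree `b`,
viewed as an element of degree `b + d`. -/
def mulSW {n d b : ℕ} (s : S K n d) (w : S K n b) : S K n (b + d) :=
  ⟨(s : MvPolynomial (Fin (n + 1)) K) * (w : MvPolynomial (Fin (n + 1)) K), by
    rw [MvPolynomial.mem_homogeneousSubmodule, Nat.add_comm b d]
    exact ((MvPolynomial.mem_homogeneousSubmodule _ _).1 s.2).mul
      ((MvPolynomial.mem_homogeneousSubmodule _ _).1 w.2)⟩

/-- Identification of spaces of homogeneous polynomials of equal degrees. -/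
def scast {n e₁ e₂ : ℕ} (h : e₁ = e₂) : S K n e₁ ≃ₗ[K] S K n e₂ :=
  LinearEquiv.ofEq _ _ (by rw [h])

/-- The increasing injection `Fin (a-1) → Fin a` omitting `j`. -/
def skipAt {a : ℕ} (j : Fin a) (i : Fin (a - 1)) : Fin a :=
  if (i : ℕ) < (j : ℕ) then ⟨i, by have := i.isLt; omega⟩
  else ⟨(i : ℕ) + 1, by have := i.isLt; omega⟩

/-- The wedge `v 0 ∧ ⋯ ∧ v (a-1)` as an element of the `a`-th exterior power. -/
def wedge {M : Type*} [AddCommGroup M] [Module K M] (a : ℕ) (v : Fin a → M) :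
    ⋀[K]^a M :=
  ⟨ExteriorAlgebra.ιMulti K a v, ExteriorAlgebra.ιMulti_range K a ⟨v, rfl⟩⟩

/-- `IsKoszulMap K n d a b δ` says that `δ : ⋀^a S_d ⊗ S_b → ⋀^{a-1} S_d ⊗ S_{b+d}` is
the Koszul map, i.e. it satisfies
`δ((s_1 ∧ ⋯ ∧ s_a) ⊗ w) = Σ_j (−1)^{j−1} (s_1 ∧ ⋯ ∧ ŝ_j ∧ ⋯ ∧ s_a) ⊗ (s_j·w)`. -/
def IsKoszulMap (n d a b : ℕ)
    (δ : ((⋀[K]^a (S K n d)) ⊗[K] (S K n b)) →ₗ[K]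
         ((⋀[K]^(a - 1) (S K n d)) ⊗[K] (S K n (b + d)))) : Prop :=
  ∀ (s : Fin a → S K n d) (w : S K n b),
    δ (wedge K a s ⊗ₜ[K] w) =
      ∑ j : Fin a, ((-1 : K) ^ (j : ℕ)) •
        ((wedge K (a - 1) fun i => s (skipAt j i)) ⊗ₜ[K] mulSW K (s j) w)

/-- Exactness of the Veronese–Koszul complex at `(i, q)`:
`ker δ_{i,qd} = im δ_{i+1,(q−1)d}` inside `⋀^i S_d ⊗ S_{qd}`. -/
def VKExact (n d i q : ℕ) : Prop :=
  ∀ (h : (q - 1) * d + d = q * d)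
    (δ₁ : ((⋀[K]^i (S K n d)) ⊗[K] (S K n (q * d))) →ₗ[K]
          ((⋀[K]^(i - 1) (S K n d)) ⊗[K] (S K n (q * d + d))))
    (δ₂ : ((⋀[K]^(i + 1) (S K n d)) ⊗[K] (S K n ((q - 1) * d))) →ₗ[K]
          ((⋀[K]^i (S K n d)) ⊗[K] (S K n ((q - 1) * d + d)))),
    IsKoszulMap K n d i (q * d) δ₁ → IsKoszulMap K n d (i + 1) ((q - 1) * d) δ₂ →
    LinearMap.ker δ₁ =
      LinearMap.range
        ((TensorProduct.congr (LinearEquiv.refl K (⋀[K]^i (S K n d)))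
            (scast K h)).toLinearMap ∘ₗ δ₂)

end

set_option maxHeartbeats 1000000
set_option synthInstance.maxHeartbeats 400000

noncomputable section Aux

open MvPolynomial

variable {K : Type*} [Field K]

lemma smul_add_neg_smul {M : Type*} [AddCommGroup M] [Module K M] (r : K) (x : M) :
    r • x + (-r) • x = 0 := by
  rw [neg_smul]
  exact add_neg_cancel _

lemma skipAt_val {a : ℕ} (j : Fin a) (i : Fin (a - 1)) :
    (skipAt j i : ℕ) = if (i : ℕ) < (j : ℕ) then (i : ℕ) else (i : ℕ) + 1 := by
  unfold skipAt; split_ifs <;> rfl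

lemma degree_add' {σ : Type*} (f g : σ →₀ ℕ) :
    (f + g).degree = f.degree + g.degree := by
  simp only [Finsupp.degree_eq_weight_one]
  exact map_add _ f g

lemma degree_single' {σ : Type*} (a : σ) (b : ℕ) :
    (Finsupp.single a b).degree = b := by
  simp only [Finsupp.degree_eq_weight_one, Finsupp.weight_apply]
  rw [Finsupp.sum_single_index] <;> simp

/-- The monomial of degree `d` with exponent `e + (d - m)·e₀`, where `e` has degree `m ≤ d`. -/
def sMon (K : Type*) [Field K] {n : ℕ} (d m : ℕ) (hm : m ≤ d)
    (e : Fin (n + 1) →₀ ℕ) (he : e.degree = m) : S K n d :=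
  ⟨MvPolynomial.monomial (e + Finsupp.single 0 (d - m)) (1 : K), by
    rw [MvPolynomial.mem_homogeneousSubmodule]
    exact MvPolynomial.isHomogeneous_monomial _
      (by rw [degree_add', he, degree_single']; omega)⟩

lemma sMon_coe {n : ℕ} (d m : ℕ) (hm : m ≤ d) (e : Fin (n + 1) →₀ ℕ) (he : e.degree = m) :
    ((sMon K d m hm e he : S K n d) : MvPolynomial (Fin (n + 1)) K)
      = MvPolynomial.monomial (e + Finsupp.single 0 (d - m)) (1 : K) := rfl

lemma exp_cancel_aux {n : ℕ} {c e f : Fin (n + 1) →₀ ℕ} (h : e + c = f + c) : e = f := by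
  ext i
  have := DFunLike.congr_fun h i
  simp only [Finsupp.add_apply] at this
  omega

lemma mulSW_sMon_symm {n : ℕ} (d t m : ℕ) (hmd : m ≤ d) (hmt : m ≤ t)
    (e f : Fin (n + 1) →₀ ℕ) (he : e.degree = m) (hf : f.degree = m) :
    mulSW K (sMon K d m hmd e he) (sMon K t m hmt f hf)
      = mulSW K (sMon K d m hmd f hf) (sMon K t m hmt e he) := by
  apply Subtype.ext
  show ((sMon K d m hmd e he : S K n d) : MvPolynomial (Fin (n + 1)) K)
      * ((sMon K t m hmt f hf : S K n t) : MvPolynomial (Fin (n + 1)) K)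
    = ((sMon K d m hmd f hf : S K n d) : MvPolynomial (Fin (n + 1)) K)
      * ((sMon K t m hmt e he : S K n t) : MvPolynomial (Fin (n + 1)) K)
  rw [sMon_coe, sMon_coe, sMon_coe, sMon_coe,
    MvPolynomial.monomial_mul, MvPolynomial.monomial_mul]
  congr 1
  abel

/-- The involution on pairs pairing up the cancelling terms of `δ ∘ δ`-type sums. -/
def koszulInvo (q : ℕ) (p : Fin (q + 1) × Fin q) : Fin (q + 1) × Fin q :=
  (skipAt p.1 p.2,
    if _ : (p.1 : ℕ) < ((skipAt p.1 p.2 : Fin (q + 1)) : ℕ) then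
      ⟨(p.1 : ℕ), by have := (skipAt p.1 p.2 : Fin (q + 1)).isLt; omega⟩
    else ⟨(p.1 : ℕ) - 1, by have := p.2.isLt; omega⟩)

lemma koszulInvo_fst (q : ℕ) (p : Fin (q + 1) × Fin q) :
    (koszulInvo q p).1 = skipAt p.1 p.2 := rfl

lemma koszulInvo_snd_val (q : ℕ) (p : Fin (q + 1) × Fin q) :
    ((koszulInvo q p).2 : ℕ)
      = if (p.1 : ℕ) < ((skipAt p.1 p.2 : Fin (q + 1)) : ℕ) then (p.1 : ℕ)
        else (p.1 : ℕ) - 1 := by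
  unfold koszulInvo
  dsimp only
  split_ifs <;> rfl

lemma koszul_pair {a : ℕ} (k k' : Fin a) (j j' : Fin (a - 1))
    (h1 : (k' : ℕ) = if (j : ℕ) < (k : ℕ) then (j : ℕ) else (j : ℕ) + 1)
    (h2 : (j' : ℕ) = if (k : ℕ) < (k' : ℕ) then (k : ℕ) else (k : ℕ) - 1) :
    skipAt k' j' = k ∧
      (∀ i : Fin (a - 1 - 1), skipAt k' (skipAt j' i) = skipAt k (skipAt j i)) ∧
      ((k' : ℕ) + (j' : ℕ) + 1 = (k : ℕ) + (j : ℕ) ∨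
        (k : ℕ) + (j : ℕ) + 1 = (k' : ℕ) + (j' : ℕ)) := by
  have hj := j.isLt
  have hk := k.isLt
  refine ⟨Fin.ext ?_, fun i => Fin.ext ?_, ?_⟩
  · simp only [skipAt_val]
    split_ifs at h1 h2 ⊢ <;> omega
  · have hi := i.isLt
    simp only [skipAt_val]
    split_ifs at h1 h2 ⊢ <;> omega
  · split_ifs at h1 h2 <;> omega

/-- The explicit Koszul syzygy element. -/
def kosElem (K : Type*) [Field K] {n : ℕ} (d t m q : ℕ) (hmd : m ≤ d) (hmt : m ≤ t)
    (μ : Fin (q + 1) → (Fin (n + 1) →₀ ℕ)) (hdeg : ∀ j, (μ j).degree = m) :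
    (⋀[K]^q (S K n d)) ⊗[K] (S K n t) :=
  ∑ k : Fin (q + 1), ((-1 : K) ^ (k : ℕ)) •
    ((wedge K q fun i => sMon K d m hmd (μ (skipAt k i)) (hdeg _)) ⊗ₜ[K]
      sMon K t m hmt (μ k) (hdeg k))

theorem kos_ker {n d t q : ℕ} (m : ℕ) (hmd : m ≤ d) (hmt : m ≤ t)
    (μ : Fin (q + 1) → (Fin (n + 1) →₀ ℕ)) (hdeg : ∀ j, (μ j).degree = m)
    (δ : ((⋀[K]^q (S K n d)) ⊗[K] (S K n t)) →ₗ[K]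
         ((⋀[K]^(q - 1) (S K n d)) ⊗[K] (S K n (t + d))))
    (hδ : IsKoszulMap K n d q t δ) :
    δ (kosElem K d t m q hmd hmt μ hdeg) = 0 := by
  classical
  have step1 : δ (kosElem K d t m q hmd hmt μ hdeg)
      = ∑ k : Fin (q + 1), ∑ j : Fin q, ((-1 : K) ^ ((k : ℕ) + (j : ℕ))) •
          ((wedge K (q - 1) fun i =>
              sMon K d m hmd (μ (skipAt k (skipAt j i))) (hdeg _)) ⊗ₜ[K]
            mulSW K (sMon K d m hmd (μ (skipAt k j)) (hdeg _))
              (sMon K t m hmt (μ k) (hdeg _))) := by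
    unfold kosElem
    rw [map_sum]
    refine Finset.sum_congr rfl fun k _ => ?_
    rw [map_smul, hδ (fun i => sMon K d m hmd (μ (skipAt k i)) (hdeg _))
      (sMon K t m hmt (μ k) (hdeg k)), Finset.smul_sum]
    refine Finset.sum_congr rfl fun j _ => ?_
    rw [smul_smul, ← pow_add]
  have step2 : (∑ p : Fin (q + 1) × Fin q, ((-1 : K) ^ ((p.1 : ℕ) + (p.2 : ℕ))) •
          ((wedge K (q - 1) fun i =>
              sMon K d m hmd (μ (skipAt p.1 (skipAt p.2 i))) (hdeg _)) ⊗ₜ[K]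
            mulSW K (sMon K d m hmd (μ (skipAt p.1 p.2)) (hdeg _))
              (sMon K t m hmt (μ p.1) (hdeg _)))) = 0 := ?_
  · rw [step1, ← step2]
    exact (Fintype.sum_prod_type' _).symm
  refine Finset.sum_ninvolution (koszulInvo q) ?_ ?_ (fun p => Finset.mem_univ _) ?_
  · intro p
    have h1 : (((koszulInvo q p).1 : Fin (q + 1)) : ℕ)
        = if (p.2 : ℕ) < (p.1 : ℕ) then (p.2 : ℕ) else (p.2 : ℕ) + 1 := by
      rw [koszulInvo_fst]; exact skipAt_val p.1 p.2
    have h2 : (((koszulInvo q p).2 : Fin q) : ℕ)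
        = if (p.1 : ℕ) < (((koszulInvo q p).1 : Fin (q + 1)) : ℕ) then (p.1 : ℕ)
          else (p.1 : ℕ) - 1 := by
      rw [koszulInvo_fst]; exact koszulInvo_snd_val q p
    obtain ⟨hP1, hP2, hP3⟩ :=
      koszul_pair p.1 (koszulInvo q p).1 p.2 (koszulInvo q p).2 h1 h2
    have e_w : (wedge K (q - 1) fun i =>
          sMon K d m hmd (μ (skipAt (koszulInvo q p).1 (skipAt (koszulInvo q p).2 i))) (hdeg _))
        = wedge K (q - 1) fun i =>
            sMon K d m hmd (μ (skipAt p.1 (skipAt p.2 i))) (hdeg _) := by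
      congr 1
      funext i
      rw [hP2 i]
    have e_m : mulSW K (sMon K d m hmd (μ (skipAt (koszulInvo q p).1 (koszulInvo q p).2)) (hdeg _))
          (sMon K t m hmt (μ (koszulInvo q p).1) (hdeg _))
        = mulSW K (sMon K d m hmd (μ (skipAt p.1 p.2)) (hdeg _))
            (sMon K t m hmt (μ p.1) (hdeg _)) := by
      rw [hP1, koszulInvo_fst]
      exact mulSW_sMon_symm d t m hmd hmt (μ p.1) (μ (skipAt p.1 p.2)) (hdeg _) (hdeg _)
    have hsign : ((-1 : K) ^ (((koszulInvo q p).1 : ℕ) + ((koszulInvo q p).2 : ℕ)))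
        = -((-1 : K) ^ ((p.1 : ℕ) + (p.2 : ℕ))) := by
      rcases hP3 with h | h
      · rw [← h, pow_succ]; ring
      · rw [← h, pow_succ]; ring
    rw [e_w, e_m, hsign]
    exact smul_add_neg_smul ((-1 : K) ^ ((p.1 : ℕ) + (p.2 : ℕ)))
      ((wedge K (q - 1) fun i => sMon K d m hmd (μ (skipAt p.1 (skipAt p.2 i))) (hdeg _)) ⊗ₜ[K]
        mulSW K (sMon K d m hmd (μ (skipAt p.1 p.2)) (hdeg _)) (sMon K t m hmt (μ p.1) (hdeg _)))
  · intro p _ h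
    have hval := congrArg (fun z : Fin (q + 1) × Fin q => ((z.1 : Fin (q + 1)) : ℕ)) h
    simp only [koszulInvo_fst, skipAt_val] at hval
    have := p.2.isLt
    split_ifs at hval <;> omega
  · intro p
    have h1 : (((koszulInvo q p).1 : Fin (q + 1)) : ℕ)
        = if (p.2 : ℕ) < (p.1 : ℕ) then (p.2 : ℕ) else (p.2 : ℕ) + 1 := by
      rw [koszulInvo_fst]; exact skipAt_val p.1 p.2
    have h2 : (((koszulInvo q p).2 : Fin q) : ℕ)
        = if (p.1 : ℕ) < (((koszulInvo q p).1 : Fin (q + 1)) : ℕ) then (p.1 : ℕ)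
          else (p.1 : ℕ) - 1 := by
      rw [koszulInvo_fst]; exact koszulInvo_snd_val q p
    obtain ⟨hP1, _, _⟩ :=
      koszul_pair p.1 (koszulInvo q p).1 p.2 (koszulInvo q p).2 h1 h2
    have c1 : (koszulInvo q (koszulInvo q p)).1 = p.1 := by
      rw [koszulInvo_fst]; exact hP1
    have c2 : ((koszulInvo q (koszulInvo q p)).2 : ℕ) = (p.2 : ℕ) := by
      rw [koszulInvo_snd_val,
        show ((skipAt (koszulInvo q p).1 (koszulInvo q p).2 : Fin (q + 1)) : ℕ)
            = (p.1 : ℕ) from congrArg Fin.val hP1]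
      have hj := p.2.isLt
      split_ifs at h1 h2 ⊢ <;> omega
    exact Prod.ext_iff.mpr ⟨c1, Fin.ext c2⟩


/-- Coefficient-extraction map used to build a determinant functional. -/
def Pmap (K : Type*) [Field K] {n : ℕ} (d m q : ℕ)
    (μ : Fin (q + 1) → (Fin (n + 1) →₀ ℕ)) : (S K n d) →ₗ[K] (Fin q → K) :=
  LinearMap.pi fun j : Fin q =>
    (MvPolynomial.lcoeff K (μ (skipAt (0 : Fin (q + 1)) j) + Finsupp.single 0 (d - m))) ∘ₗ
      (S K n d).subtype

def famA (K : Type*) [Field K] {n : ℕ} (d m q : ℕ)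
    (μ : Fin (q + 1) → (Fin (n + 1) →₀ ℕ)) : ∀ i : ℕ, (S K n d) [⋀^Fin i]→ₗ[K] K :=
  Function.update (fun _ => 0) q (Matrix.detRowAlternating.compLinearMap (Pmap K d m q μ))

def fEmap (K : Type*) [Field K] {n : ℕ} (d m q : ℕ)
    (μ : Fin (q + 1) → (Fin (n + 1) →₀ ℕ)) : (⋀[K]^q (S K n d)) →ₗ[K] K :=
  (ExteriorAlgebra.liftAlternating (famA K d m q μ)) ∘ₗ (Submodule.subtype _)

def fwmap (K : Type*) [Field K] {n : ℕ} (t m q : ℕ)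
    (μ : Fin (q + 1) → (Fin (n + 1) →₀ ℕ)) : (S K n t) →ₗ[K] K :=
  (MvPolynomial.lcoeff K (μ 0 + Finsupp.single 0 (t - m))) ∘ₗ (S K n t).subtype

def phiMap (K : Type*) [Field K] {n : ℕ} (d t m q : ℕ)
    (μ : Fin (q + 1) → (Fin (n + 1) →₀ ℕ)) :
    ((⋀[K]^q (S K n d)) ⊗[K] (S K n t)) →ₗ[K] K :=
  (TensorProduct.lid K K).toLinearMap ∘ₗ
    TensorProduct.map (fEmap K d m q μ) (fwmap K t m q μ)

lemma phiMap_tmul {n : ℕ} (d t m q : ℕ) (μ : Fin (q + 1) → (Fin (n + 1) →₀ ℕ))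
    (x : ⋀[K]^q (S K n d)) (y : S K n t) :
    phiMap K d t m q μ (x ⊗ₜ[K] y) = fEmap K d m q μ x * fwmap K t m q μ y := by
  simp [phiMap, TensorProduct.lid_tmul, smul_eq_mul]

lemma fE_wedge {n : ℕ} (d m q : ℕ) (μ : Fin (q + 1) → (Fin (n + 1) →₀ ℕ))
    (v : Fin q → S K n d) :
    fEmap K d m q μ (wedge K q v)
      = Matrix.detRowAlternating (fun k => Pmap K d m q μ (v k)) := by
  have h1 : fEmap K d m q μ (wedge K q v)
      = ExteriorAlgebra.liftAlternating (famA K d m q μ) (ExteriorAlgebra.ιMulti K q v) := rfl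
  rw [h1, ExteriorAlgebra.liftAlternating_apply_ιMulti,
    show famA K d m q μ q = Matrix.detRowAlternating.compLinearMap (Pmap K d m q μ) from
      Function.update_self _ _ _]
  rfl

theorem kos_ne {n d t q : ℕ} (m : ℕ) (hmd : m ≤ d) (hmt : m ≤ t)
    (μ : Fin (q + 1) → (Fin (n + 1) →₀ ℕ)) (hμinj : Function.Injective μ)
    (hdeg : ∀ j, (μ j).degree = m) :
    kosElem K d t m q hmd hmt μ hdeg ≠ 0 := by
  classical
  have hφ1 : phiMap K d t m q μ (kosElem K d t m q hmd hmt μ hdeg) = 1 := by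
    unfold kosElem
    rw [map_sum, Finset.sum_eq_single (0 : Fin (q + 1))]
    · rw [map_smul, phiMap_tmul]
      have hfw0 : fwmap K t m q μ (sMon K t m hmt (μ 0) (hdeg 0)) = 1 := by
        have hr : fwmap K t m q μ (sMon K t m hmt (μ 0) (hdeg 0))
            = MvPolynomial.coeff (μ 0 + Finsupp.single 0 (t - m))
                ((sMon K t m hmt (μ 0) (hdeg 0) : S K n t) : MvPolynomial (Fin (n + 1)) K) :=
          rfl
        rw [hr, sMon_coe, MvPolynomial.coeff_monomial, if_pos rfl]
      have hfE : fEmap K d m q μ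
          (wedge K q fun i => sMon K d m hmd (μ (skipAt (0 : Fin (q + 1)) i)) (hdeg _))
          = 1 := by
        rw [fE_wedge]
        have hM : (fun k : Fin q =>
              Pmap K d m q μ (sMon K d m hmd (μ (skipAt (0 : Fin (q + 1)) k)) (hdeg _)))
            = (1 : Matrix (Fin q) (Fin q) K) := by
          funext k j
          have hr : Pmap K d m q μ
                (sMon K d m hmd (μ (skipAt (0 : Fin (q + 1)) k)) (hdeg _)) j
              = MvPolynomial.coeff (μ (skipAt (0 : Fin (q + 1)) j) + Finsupp.single 0 (d - m))
                  ((sMon K d m hmd (μ (skipAt (0 : Fin (q + 1)) k)) (hdeg _) : S K n d) :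
                    MvPolynomial (Fin (n + 1)) K) := rfl
          show Pmap K d m q μ
              (sMon K d m hmd (μ (skipAt (0 : Fin (q + 1)) k)) (hdeg _)) j
            = (1 : Matrix (Fin q) (Fin q) K) k j
          rw [hr, sMon_coe, MvPolynomial.coeff_monomial, Matrix.one_apply]
          by_cases hkj : k = j
          · subst hkj
            rw [if_pos rfl, if_pos rfl]
          · rw [if_neg hkj, if_neg]
            intro hEq
            apply hkj
            have hsk : skipAt (0 : Fin (q + 1)) k = skipAt (0 : Fin (q + 1)) j :=
              hμinj (exp_cancel_aux hEq)
            have hv := congrArg Fin.val hsk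
            simp only [skipAt_val] at hv
            exact Fin.ext (by split_ifs at hv <;> omega)
        rw [hM]
        exact Matrix.det_one
      rw [hfE, hfw0, show (((0 : Fin (q + 1)) : ℕ)) = 0 from rfl, pow_zero, one_smul, one_mul]
    · intro k _ hk
      rw [map_smul, phiMap_tmul]
      have hfwk : fwmap K t m q μ (sMon K t m hmt (μ k) (hdeg k)) = 0 := by
        have hr : fwmap K t m q μ (sMon K t m hmt (μ k) (hdeg k))
            = MvPolynomial.coeff (μ 0 + Finsupp.single 0 (t - m))
                ((sMon K t m hmt (μ k) (hdeg k) : S K n t) : MvPolynomial (Fin (n + 1)) K) :=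
          rfl
        rw [hr, sMon_coe, MvPolynomial.coeff_monomial, if_neg]
        intro hEq
        exact hk (hμinj (exp_cancel_aux hEq))
      rw [hfwk, mul_zero, smul_zero]
    · intro h
      exact absurd (Finset.mem_univ _) h
  intro h0
  rw [h0, map_zero] at hφ1
  exact zero_ne_one hφ1


end Aux


/-- for `1 ≤ q ≤ C(n+d,n) − 1`, `t ≥ 1`, `q + 1 ≤ C(n+t,n)`, the Koszul map
`δ_{q,t} : ⋀^q S_d ⊗ S_t → ⋀^{q−1} S_d ⊗ S_{t+d}` has nonzero kernel. -/
theorem stmt2 (K : Type*) [Field K] [CharZero K] (n : ℕ) (hn : 1 ≤ n) (d : ℕ) (hd : 1 ≤ d)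
    (q t : ℕ) (hq : 1 ≤ q) (ht : 1 ≤ t)
    (hqN : q ≤ Nat.choose (n + d) n - 1) (hqt : q + 1 ≤ Nat.choose (n + t) n)
    (δ : ((⋀[K]^q (S K n d)) ⊗[K] (S K n t)) →ₗ[K]
         ((⋀[K]^(q - 1) (S K n d)) ⊗[K] (S K n (t + d))))
    (hδ : IsKoszulMap K n d q t δ) :
    LinearMap.ker δ ≠ ⊥ := by
  classical
  set m := min d t with hm
  have hmd : m ≤ d := min_le_left _ _
  have hmt : m ≤ t := min_le_right _ _
  have hcard : q + 1 ≤ Fintype.card (Sym (Fin (n + 1)) m) := by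
    rw [Sym.card_sym_eq_choose, Fintype.card_fin,
      show n + 1 + m - 1 = n + m from by omega,
      show (n + m).choose m = (n + m).choose n from by
        rw [← Nat.choose_symm (show m ≤ n + m by omega),
          show n + m - m = n from by omega]]
    have hD : q + 1 ≤ (n + d).choose n := by
      have hpos := Nat.choose_pos (show n ≤ n + d by omega)
      omega
    rcases Nat.le_total d t with hdt | htd
    · rw [show m = d from (min_eq_left hdt)]
      exact hD
    · rw [show m = t from (min_eq_right htd)]
      exact hqt
  obtain ⟨emb⟩ := Function.Embedding.nonempty_of_card_le
    (show Fintype.card (Fin (q + 1)) ≤ Fintype.card (Sym (Fin (n + 1)) m) by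
      rwa [Fintype.card_fin])
  set μ : Fin (q + 1) → (Fin (n + 1) →₀ ℕ) :=
    fun j => Multiset.toFinsupp ((emb j : Sym (Fin (n + 1)) m) : Multiset (Fin (n + 1))) with hμ
  have hμinj : Function.Injective μ := by
    intro a b h
    apply emb.injective
    apply Sym.coe_injective
    exact Multiset.toFinsupp.injective h
  have hdeg : ∀ j, (μ j).degree = m := by
    intro j
    have hc : Multiset.card ((emb j : Sym (Fin (n + 1)) m) : Multiset (Fin (n + 1))) = m :=
      (emb j).2
    have h2 : (μ j).degree
        = Multiset.card ((emb j : Sym (Fin (n + 1)) m) : Multiset (Fin (n + 1))) :=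
      Multiset.toFinsupp_sum_eq _
    exact h2.trans hc
  rw [Submodule.ne_bot_iff]
  exact ⟨kosElem K d t m q hmd hmt μ hdeg,
    LinearMap.mem_ker.mpr (kos_ker m hmd hmt μ hdeg δ hδ),
    kos_ne m hmd hmt μ hμinj hdeg⟩
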